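/- (Positivity of the nonlinearity near q₃ = 0; claim (signf).) Let A < 0, B > 0, C > 0 and define f(q₁, q₃) := 6q₃(A − Bq₃ + 6Cq₃²) + 2(B + 6Cq₃)q₁². Then there exists δ ∈ (0, s₊/6), depending only on A, B, C, such that f(q₁, q₃) > 0 for every q₁ ∈ ℝ and every q₃ ∈ [−δ, 0). -/
import Mathlib


open Set

noncomputable section

/-- `s₊ = (B + √(B² + 24|A|C))/(4C)`. -/
def splus (A B C : ℝ) : ℝ := (B + Real.sqrt (B ^ 2 + 24 * |A| * C)) / (4 * C)

/-- The nonlinearity `f(q₁, q₃) = 6q₃(A − Bq₃ + 6Cq₃²) + 2(B + 6Cq₃)q₁²`. -/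
def fnl (A B C q1 q3 : ℝ) : ℝ :=
  6 * q3 * (A - B * q3 + 6 * C * q3 ^ 2) + 2 * (B + 6 * C * q3) * q1 ^ 2

/-- claim (signf): there exists `δ ∈ (0, s₊/6)`, depending only on
`A, B, C`, such that `f(q₁, q₃) > 0` for every `q₁ ∈ ℝ` and every `q₃ ∈ [−δ, 0)`. -/
theorem statement_12 (A B C : ℝ) (hA : A < 0) (hB : 0 < B) (hC : 0 < C) :
    ∃ δ ∈ Ioo (0 : ℝ) (splus A B C / 6),
      ∀ q1 : ℝ, ∀ q3 ∈ Ico (-δ) (0 : ℝ), 0 < fnl A B C q1 q3 := by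
  have hsplus : 0 < splus A B C := by
    unfold splus
    have h1 : 0 ≤ Real.sqrt (B ^ 2 + 24 * |A| * C) := Real.sqrt_nonneg _
    positivity
  set δ : ℝ := min (splus A B C / 12) (min (B / (12 * C)) (-A / (4 * B))) with hδ
  have hδpos : 0 < δ := by
    apply lt_min (by linarith)
    exact lt_min (by positivity) (div_pos (by linarith) (by positivity))
  refine ⟨δ, ⟨hδpos, ?_⟩, ?_⟩
  · calc δ ≤ splus A B C / 12 := min_le_left _ _
      _ < splus A B C / 6 := by linarith
  · intro q1 q3 hq3
    obtain ⟨h1, h2⟩ := hq3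
    have hδB : δ ≤ B / (12 * C) := le_trans (min_le_right _ _) (min_le_left _ _)
    have hδA : δ ≤ -A / (4 * B) := le_trans (min_le_right _ _) (min_le_right _ _)
    have hBδ : B * δ ≤ -A / 4 := by
      rw [le_div_iff₀ (by positivity : (0:ℝ) < 4 * B)] at hδA
      linarith
    have hCδ : 6 * C * δ ≤ B / 2 := by
      rw [le_div_iff₀ (by positivity : (0:ℝ) < 12 * C)] at hδB
      nlinarith
    -- key: A - B*q3 + 6*C*q3^2 < 0
    have hq3sq : q3 ^ 2 ≤ δ ^ 2 := by nlinarith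
    have hP : A - B * q3 + 6 * C * q3 ^ 2 < 0 := by nlinarith
    have hBC : 0 < B + 6 * C * q3 := by nlinarith
    unfold fnl
    nlinarith [mul_pos (neg_pos.2 h2) (neg_pos.2 hP), mul_nonneg hBC.le (sq_nonneg q1)]
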